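/- Let F : ℝ² → ℝ be continuous, α > 0, a, b, λ₁, ω₁ ∈ ℝ, and define C₁ = (1/2π)∫₀^{2π} F(cos s, sin s) sin² s ds, C₂ = (1/2π)∫₀^{2π} F(cos s, sin s) cos s sin s ds, C₃ = (1/2π)∫₀^{2π} F(cos s, sin s) cos² s ds. Then (1/2π)∫₀^{2π} F(cos s, sin s)(λ₁ sin s + ω₁ cos s)[ b ∫₀^∞ cos(s−r)e^{−αr} dr − a ∫₀^∞ sin(s−r)e^{−αr} dr ] ds = (1/(α²+1)) [ (b − α a)(ω₁ C₂ + λ₁ C₁) + (a + α b)(ω₁ C₃ + λ₁ C₂) ]. -/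

import Mathlib

open MeasureTheory Filter

lemma trig_exp_int (α : ℝ) (hα : 0 < α) (s A B : ℝ) :
    ∫ r in Set.Ioi (0:ℝ),
      ((-α * (A * Real.cos (s-r) + B * Real.sin (s-r)) +
        (A * Real.sin (s-r) - B * Real.cos (s-r))) * Real.exp (-α*r)) =
      -(A * Real.cos s + B * Real.sin s) := by
  set G : ℝ → ℝ := fun r => Real.exp (-α*r) * (A * Real.cos (s-r) + B * Real.sin (s-r)) with hG
  have hderiv : ∀ r : ℝ, HasDerivAt G
      ((-α * (A * Real.cos (s-r) + B * Real.sin (s-r)) +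
        (A * Real.sin (s-r) - B * Real.cos (s-r))) * Real.exp (-α*r)) r := by
    intro r
    have hinner : HasDerivAt (fun r : ℝ => s - r) (-1) r := by
      simpa using (hasDerivAt_id r).const_sub s
    have hc : HasDerivAt (fun r : ℝ => Real.cos (s - r)) (Real.sin (s-r)) r := by
      simpa [Function.comp_def] using (Real.hasDerivAt_cos (s-r)).comp r hinner
    have hsn : HasDerivAt (fun r : ℝ => Real.sin (s - r)) (-Real.cos (s-r)) r := by
      simpa [Function.comp_def] using (Real.hasDerivAt_sin (s-r)).comp r hinner
    have h0 : HasDerivAt (fun r : ℝ => -α*r) (-α) r := by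
      simpa using (hasDerivAt_id r).const_mul (-α)
    have he : HasDerivAt (fun r : ℝ => Real.exp (-α*r)) (-α * Real.exp (-α*r)) r := by
      simpa [Function.comp_def, mul_comm] using (Real.hasDerivAt_exp (-α*r)).comp r h0
    have := he.mul ((hc.const_mul A).add (hsn.const_mul B))
    convert this using 1
    all_goals first | rfl | (simp only [Pi.add_apply, Pi.mul_apply]; ring)
  have hbound : ∀ r : ℝ,
      ‖-α * (A * Real.cos (s-r) + B * Real.sin (s-r)) +
        (A * Real.sin (s-r) - B * Real.cos (s-r))‖ ≤ (α+1)*(|A|+|B|) := by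
    intro r
    have h1 : |A * Real.cos (s-r)| ≤ |A| := by
      rw [abs_mul]; nlinarith [Real.abs_cos_le_one (s-r), abs_nonneg A]
    have h2 : |B * Real.sin (s-r)| ≤ |B| := by
      rw [abs_mul]; nlinarith [Real.abs_sin_le_one (s-r), abs_nonneg B]
    have h3 : |A * Real.sin (s-r)| ≤ |A| := by
      rw [abs_mul]; nlinarith [Real.abs_sin_le_one (s-r), abs_nonneg A]
    have h4 : |B * Real.cos (s-r)| ≤ |B| := by
      rw [abs_mul]; nlinarith [Real.abs_cos_le_one (s-r), abs_nonneg B]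
    have ha : |(-α) * (A * Real.cos (s-r) + B * Real.sin (s-r))| ≤ α * (|A|+|B|) := by
      rw [abs_mul, abs_neg, abs_of_pos hα]
      have := abs_add_le (A * Real.cos (s-r)) (B * Real.sin (s-r))
      nlinarith
    have hb2 : |A * Real.sin (s-r) - B * Real.cos (s-r)| ≤ |A| + |B| := by
      have := abs_sub (A * Real.sin (s-r)) (B * Real.cos (s-r))
      linarith
    have := abs_add_le (-α * (A * Real.cos (s-r) + B * Real.sin (s-r)))
      (A * Real.sin (s-r) - B * Real.cos (s-r))
    rw [Real.norm_eq_abs]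
    nlinarith
  have htend : Tendsto G atTop (nhds 0) := by
    have h1 : Tendsto (fun r : ℝ => Real.exp (-α*r)) atTop (nhds 0) := by
      have : Tendsto (fun r : ℝ => α * r) atTop atTop :=
        Tendsto.const_mul_atTop hα tendsto_id
      simpa [Function.comp_def, neg_mul] using
        (Real.tendsto_exp_neg_atTop_nhds_zero.comp this)
    have h2 : Tendsto (fun r : ℝ => (|A|+|B|) * Real.exp (-α*r)) atTop (nhds 0) := by
      simpa using h1.const_mul (|A|+|B|)
    refine squeeze_zero_norm (fun r => ?_) h2
    have hb : |A * Real.cos (s-r) + B * Real.sin (s-r)| ≤ |A| + |B| := by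
      have h1 : |A * Real.cos (s-r)| ≤ |A| := by
        rw [abs_mul]; nlinarith [Real.abs_cos_le_one (s-r), abs_nonneg A]
      have h2 : |B * Real.sin (s-r)| ≤ |B| := by
        rw [abs_mul]; nlinarith [Real.abs_sin_le_one (s-r), abs_nonneg B]
      have := abs_add_le (A * Real.cos (s-r)) (B * Real.sin (s-r))
      linarith
    have hGr : ‖G r‖ = Real.exp (-α*r) * |A * Real.cos (s-r) + B * Real.sin (s-r)| := by
      rw [hG]; simp [abs_mul, abs_of_pos (Real.exp_pos _)]
    rw [hGr, mul_comm]
    exact mul_le_mul_of_nonneg_right hb (Real.exp_pos _).le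
  have hint : IntegrableOn (fun r =>
      (-α * (A * Real.cos (s-r) + B * Real.sin (s-r)) +
        (A * Real.sin (s-r) - B * Real.cos (s-r))) * Real.exp (-α*r)) (Set.Ioi (0:ℝ)) := by
    refine Integrable.mono' ((exp_neg_integrableOn_Ioi 0 hα).const_mul ((α+1)*(|A|+|B|)))
      ((Continuous.mul (by fun_prop) (by fun_prop)).aestronglyMeasurable) ?_
    filter_upwards with r
    rw [norm_mul, Real.norm_eq_abs (Real.exp _), abs_of_pos (Real.exp_pos _)]
    have := hbound r
    nlinarith [Real.exp_pos (-α*r)]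
  have key := integral_Ioi_of_hasDerivAt_of_tendsto
    (f := G) (a := 0) (hderiv 0).continuousAt.continuousWithinAt
    (fun x _ => hderiv x) hint htend
  rw [key, hG]
  simp

lemma cos_exp_int (α : ℝ) (hα : 0 < α) (s : ℝ) :
    ∫ r in Set.Ioi (0:ℝ), Real.cos (s - r) * Real.exp (-α * r) =
      (α * Real.cos s + Real.sin s) / (α^2 + 1) := by
  have h1 : (α^2+1) ≠ 0 := by positivity
  have h := trig_exp_int α hα s (-α/(α^2+1)) (-1/(α^2+1))
  have heq : (fun r => Real.cos (s - r) * Real.exp (-α * r)) =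
      fun r => ((-α * ((-α/(α^2+1)) * Real.cos (s-r) + (-1/(α^2+1)) * Real.sin (s-r)) +
        ((-α/(α^2+1)) * Real.sin (s-r) - (-1/(α^2+1)) * Real.cos (s-r))) * Real.exp (-α*r)) := by
    funext r
    field_simp
    ring
  rw [heq, h]
  field_simp
  ring

lemma sin_exp_int (α : ℝ) (hα : 0 < α) (s : ℝ) :
    ∫ r in Set.Ioi (0:ℝ), Real.sin (s - r) * Real.exp (-α * r) =
      (α * Real.sin s - Real.cos s) / (α^2 + 1) := by
  have h1 : (α^2+1) ≠ 0 := by positivity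
  have h := trig_exp_int α hα s (1/(α^2+1)) (-α/(α^2+1))
  have heq : (fun r => Real.sin (s - r) * Real.exp (-α * r)) =
      fun r => ((-α * ((1/(α^2+1)) * Real.cos (s-r) + (-α/(α^2+1)) * Real.sin (s-r)) +
        ((1/(α^2+1)) * Real.sin (s-r) - (-α/(α^2+1)) * Real.cos (s-r))) * Real.exp (-α*r)) := by
    funext r
    field_simp
    ring
  rw [heq, h]
  field_simp
  ring

/-- Explicit evaluation of the synchronization integral σ for indirectly coupled
λ-ω oscillators in terms of the Fourier-type coefficients `C₁, C₂, C₃`. -/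
theorem stmt_11 (F : ℝ × ℝ → ℝ) (hF : Continuous F)
    (α : ℝ) (hα : 0 < α) (a b lam₁ om₁ : ℝ)
    (C₁ C₂ C₃ : ℝ)
    (hC₁ : C₁ = (1 / (2 * Real.pi)) *
      ∫ s in (0:ℝ)..(2 * Real.pi), F (Real.cos s, Real.sin s) * (Real.sin s)^2)
    (hC₂ : C₂ = (1 / (2 * Real.pi)) *
      ∫ s in (0:ℝ)..(2 * Real.pi), F (Real.cos s, Real.sin s) * Real.cos s * Real.sin s)
    (hC₃ : C₃ = (1 / (2 * Real.pi)) *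
      ∫ s in (0:ℝ)..(2 * Real.pi), F (Real.cos s, Real.sin s) * (Real.cos s)^2) :
    (1 / (2 * Real.pi)) *
      ∫ s in (0:ℝ)..(2 * Real.pi),
        F (Real.cos s, Real.sin s) * (lam₁ * Real.sin s + om₁ * Real.cos s) *
          (b * (∫ r in Set.Ioi (0:ℝ), Real.cos (s - r) * Real.exp (-α * r)) -
           a * (∫ r in Set.Ioi (0:ℝ), Real.sin (s - r) * Real.exp (-α * r))) =
    (1 / (α^2 + 1)) *
      ((b - α * a) * (om₁ * C₂ + lam₁ * C₁) + (a + α * b) * (om₁ * C₃ + lam₁ * C₂)) := by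
  have h1 : (α^2+1) ≠ 0 := by positivity
  set c₁ : ℝ := (b - α*a)*lam₁/(α^2+1) with hc1
  set c₂ : ℝ := ((b - α*a)*om₁ + (a + α*b)*lam₁)/(α^2+1) with hc2
  set c₃ : ℝ := (a + α*b)*om₁/(α^2+1) with hc3
  have heq : ∀ s : ℝ,
      F (Real.cos s, Real.sin s) * (lam₁ * Real.sin s + om₁ * Real.cos s) *
        (b * (∫ r in Set.Ioi (0:ℝ), Real.cos (s - r) * Real.exp (-α * r)) -
         a * (∫ r in Set.Ioi (0:ℝ), Real.sin (s - r) * Real.exp (-α * r))) =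
      c₁ * (F (Real.cos s, Real.sin s) * (Real.sin s)^2) +
      c₂ * (F (Real.cos s, Real.sin s) * Real.cos s * Real.sin s) +
      c₃ * (F (Real.cos s, Real.sin s) * (Real.cos s)^2) := by
    intro s
    rw [cos_exp_int α hα s, sin_exp_int α hα s, hc1, hc2, hc3]
    field_simp
    ring
  have hg : Continuous (fun s : ℝ => F (Real.cos s, Real.sin s)) := by fun_prop
  have hi₁ : IntervalIntegrable (fun s => F (Real.cos s, Real.sin s) * (Real.sin s)^2)
      volume 0 (2*Real.pi) := (by fun_prop : Continuous _).intervalIntegrable _ _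
  have hi₂ : IntervalIntegrable (fun s => F (Real.cos s, Real.sin s) * Real.cos s * Real.sin s)
      volume 0 (2*Real.pi) := (by fun_prop : Continuous _).intervalIntegrable _ _
  have hi₃ : IntervalIntegrable (fun s => F (Real.cos s, Real.sin s) * (Real.cos s)^2)
      volume 0 (2*Real.pi) := (by fun_prop : Continuous _).intervalIntegrable _ _
  have hsplit :
      ∫ s in (0:ℝ)..(2 * Real.pi),
        F (Real.cos s, Real.sin s) * (lam₁ * Real.sin s + om₁ * Real.cos s) *
          (b * (∫ r in Set.Ioi (0:ℝ), Real.cos (s - r) * Real.exp (-α * r)) -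
           a * (∫ r in Set.Ioi (0:ℝ), Real.sin (s - r) * Real.exp (-α * r))) =
      c₁ * (∫ s in (0:ℝ)..(2 * Real.pi), F (Real.cos s, Real.sin s) * (Real.sin s)^2) +
      c₂ * (∫ s in (0:ℝ)..(2 * Real.pi), F (Real.cos s, Real.sin s) * Real.cos s * Real.sin s) +
      c₃ * (∫ s in (0:ℝ)..(2 * Real.pi), F (Real.cos s, Real.sin s) * (Real.cos s)^2) := by
    rw [intervalIntegral.integral_congr (g := fun s =>
        c₁ * (F (Real.cos s, Real.sin s) * (Real.sin s)^2) +
        c₂ * (F (Real.cos s, Real.sin s) * Real.cos s * Real.sin s) +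
        c₃ * (F (Real.cos s, Real.sin s) * (Real.cos s)^2)) (fun s _ => heq s)]
    rw [intervalIntegral.integral_add ((hi₁.const_mul c₁).add (hi₂.const_mul c₂))
      (hi₃.const_mul c₃),
      intervalIntegral.integral_add (hi₁.const_mul c₁) (hi₂.const_mul c₂),
      intervalIntegral.integral_const_mul, intervalIntegral.integral_const_mul,
      intervalIntegral.integral_const_mul]
  rw [hsplit, hC₁, hC₂, hC₃, hc1, hc2, hc3]
  field_simp
  ring
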